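/- Let T : M_n(ℂ) → M_n(ℂ) be an ℝ-linear bijective map preserving the spectral radius: ρ(T(x)) = ρ(x) for all x. Then T maps scalar matrices to scalar matrices; in particular T(I) = μI for some complex number μ with |μ| = 1. -/

import Mathlib

open Matrix Polynomial

noncomputable def specRad (n : ℕ) (x : Matrix (Fin n) (Fin n) ℂ) : ℝ :=
  sSup ((fun z : ℂ => ‖z‖) '' spectrum ℂ x)

section Aux

attribute [local instance] Matrix.frobeniusSeminormedAddCommGroup
  Matrix.frobeniusNormedAddCommGroup Matrix.frobeniusNormedRing
  Matrix.frobeniusNormedSpace Matrix.frobeniusNormedAlgebra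

variable {n : ℕ}

lemma bddAbove_abs_spec (x : Matrix (Fin n) (Fin n) ℂ) :
    BddAbove ((fun z : ℂ => ‖z‖) '' spectrum ℂ x) :=
  ((spectrum.isCompact x).image continuous_norm).bddAbove

lemma abs_le_specRad {x : Matrix (Fin n) (Fin n) ℂ} {μ : ℂ} (h : μ ∈ spectrum ℂ x) :
    ‖μ‖ ≤ specRad n x :=
  le_csSup (bddAbove_abs_spec x) ⟨μ, h, rfl⟩

lemma specRad_nonneg (x : Matrix (Fin n) (Fin n) ℂ) : 0 ≤ specRad n x :=
  Real.sSup_nonneg (by rintro y ⟨μ, _, rfl⟩; exact norm_nonneg _)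

lemma specRad_smul_one (hn : 0 < n) (μ : ℂ) :
    specRad n (μ • (1 : Matrix (Fin n) (Fin n) ℂ)) = ‖μ‖ := by
  haveI : NeZero n := ⟨hn.ne'⟩
  have : spectrum ℂ (μ • (1 : Matrix (Fin n) (Fin n) ℂ)) = {μ} := by
    rw [← Algebra.algebraMap_eq_smul_one]
    exact spectrum.scalar_eq μ
  rw [specRad, this, Set.image_singleton, csSup_singleton]

lemma specRad_smul_one_add (lam : ℂ) (x : Matrix (Fin n) (Fin n) ℂ) :
    specRad n (lam • 1 + x) ≤ ‖lam‖ + specRad n x := by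
  apply Real.sSup_le
  · rintro r ⟨ν, hν, rfl⟩
    rw [← Algebra.algebraMap_eq_smul_one, ← spectrum.singleton_add_eq] at hν
    obtain ⟨b, hb, c, hc, rfl⟩ := Set.mem_add.mp hν
    rw [Set.mem_singleton_iff] at hb
    rw [hb]
    have h1 : ‖c‖ ≤ specRad n x := abs_le_specRad hc
    have h2 := norm_add_le lam c
    linarith
  · have := specRad_nonneg x; positivity

lemma specRad_sq_zero {x : Matrix (Fin n) (Fin n) ℂ} (h : x * x = 0) : specRad n x = 0 := by
  refine le_antisymm (Real.sSup_le ?_ le_rfl) (specRad_nonneg x)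
  rintro r ⟨μ, hμ, rfl⟩
  have h2 : μ ^ 2 ∈ spectrum ℂ (x ^ 2) := spectrum.pow_image_subset x 2 ⟨μ, hμ, rfl⟩
  rw [pow_two, h] at h2
  rcases subsingleton_or_nontrivial (Matrix (Fin n) (Fin n) ℂ) with hs | hs
  · rw [spectrum.of_subsingleton] at h2; exact absurd h2 (Set.notMem_empty _)
  · rw [spectrum.zero_eq] at h2
    rw [Set.mem_singleton_iff, pow_eq_zero_iff (two_ne_zero)] at h2
    simp [h2]

lemma eval_charpoly_matrix (A : Matrix (Fin n) (Fin n) ℂ) (μ : ℂ) :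
    A.charpoly.eval μ = (μ • (1 : Matrix (Fin n) (Fin n) ℂ) - A).det := by
  rw [Matrix.charpoly, ← Polynomial.coe_evalRingHom, RingHom.map_det]
  congr 1
  ext i j
  by_cases h : i = j
  · subst h
    simp [charmatrix_apply_eq, Matrix.one_apply, Matrix.smul_apply]
  · simp [charmatrix_apply_ne _ _ _ h, Matrix.one_apply_ne h, Matrix.smul_apply]

lemma root_mem_spectrum {A : Matrix (Fin n) (Fin n) ℂ} {μ : ℂ}
    (h : A.charpoly.eval μ = 0) : μ ∈ spectrum ℂ A := by
  rw [spectrum.mem_iff, Algebra.algebraMap_eq_smul_one]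
  rw [Matrix.isUnit_iff_isUnit_det, ← eval_charpoly_matrix, h]
  exact not_isUnit_zero

lemma abs_trace_sq_le (y : Matrix (Fin n) (Fin n) ℂ) :
    ‖(y * y).trace‖ ≤ n * specRad n y ^ 2 := by
  have htr : (y * y).trace = ((y * y).charpoly.roots).sum :=
    Matrix.trace_eq_sum_roots_charpoly (y * y)
  have hroots : ∀ μ ∈ (y * y).charpoly.roots, ‖μ‖ ≤ specRad n y ^ 2 := by
    intro μ hμ
    have hmem : μ ∈ spectrum ℂ (y * y) :=
      root_mem_spectrum ((Polynomial.mem_roots (Matrix.charpoly_monic _).ne_zero).mp hμ)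
    rw [← pow_two, spectrum.map_pow_of_pos y (by norm_num : 0 < 2)] at hmem
    obtain ⟨ν, hν, rfl⟩ := hmem
    rw [norm_pow]
    have h1 := abs_le_specRad hν
    have h0 : (0:ℝ) ≤ ‖ν‖ := by positivity
    exact pow_le_pow_left₀ h0 h1 2
  have hcard : (((y * y).charpoly.roots).card : ℝ) ≤ n := by
    have := (y * y).charpoly.card_roots'
    rw [Matrix.charpoly_natDegree_eq_dim, Fintype.card_fin] at this
    exact_mod_cast this
  have hs1 : ‖(y * y).trace‖ ≤ (((y * y).charpoly.roots).map (fun μ => ‖μ‖)).sum := by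
    rw [htr]
    exact norm_multiset_sum_le ((y * y).charpoly.roots)
  have hs2 : (((y * y).charpoly.roots).map (fun μ => ‖μ‖)).sum
      ≤ (((y * y).charpoly.roots).card) • (specRad n y ^ 2) := by
    have := Multiset.sum_le_card_nsmul (((y * y).charpoly.roots).map (fun μ => ‖μ‖))
      (specRad n y ^ 2) (by
        intro r hr
        obtain ⟨μ, hμ, rfl⟩ := Multiset.mem_map.mp hr
        exact hroots μ hμ)
    simpa [Multiset.card_map] using this
  have h0 : (0:ℝ) ≤ specRad n y ^ 2 := by positivity
  calc ‖(y * y).trace‖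
      ≤ (((y * y).charpoly.roots).card) • (specRad n y ^ 2) := le_trans hs1 hs2
    _ = (((y * y).charpoly.roots).card : ℝ) * (specRad n y ^ 2) := by rw [nsmul_eq_mul]
    _ ≤ n * specRad n y ^ 2 := mul_le_mul_of_nonneg_right hcard h0

lemma eq_smul_one_of_all_eigen (hn : 0 < n) {a : Matrix (Fin n) (Fin n) ℂ}
    (h : ∀ u : Fin n → ℂ, ∃ c : ℂ, a.mulVec u = c • u) :
    ∃ c : ℂ, a = c • 1 := by
  choose c hc using fun j => h (Pi.single j 1)
  have hentry : ∀ i j, a i j = if i = j then c j else 0 := by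
    intro i j
    have := congrFun (hc j) i
    simp only [Matrix.mulVec_single, mul_one, Pi.smul_apply, Pi.single_apply,
      smul_eq_mul] at this
    by_cases hij : i = j <;> simp [hij] at this ⊢ <;> simp [this]
  have hconst : ∀ i j : Fin n, c i = c j := by
    intro i j
    by_cases hij : i = j
    · rw [hij]
    · obtain ⟨d, hd⟩ := h (Pi.single i 1 + Pi.single j 1)
      rw [Matrix.mulVec_add, hc i, hc j] at hd
      have hi := congrFun hd i
      have hj := congrFun hd j
      simp only [Pi.add_apply, Pi.smul_apply, Pi.single_apply, smul_eq_mul] at hi hj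
      simp [hij, Ne.symm hij] at hi hj
      rw [hi, hj]
  refine ⟨c ⟨0, hn⟩, ?_⟩
  ext i j
  rw [hentry i j, Matrix.smul_apply, Matrix.one_apply]
  by_cases hij : i = j
  · simp [hij, hconst j ⟨0, hn⟩]
  · simp [hij]

lemma exists_nilpotent_pert (hn : 0 < n) {a : Matrix (Fin n) (Fin n) ℂ}
    (ha : ¬∃ c : ℂ, a = c • 1) :
    ∃ N : Matrix (Fin n) (Fin n) ℂ, N * N = 0 ∧ (a * N).trace = 1 := by
  have : ∃ u : Fin n → ℂ, a.mulVec u ∉ Submodule.span ℂ {u} := by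
    by_contra hcon
    push_neg at hcon
    refine ha (eq_smul_one_of_all_eigen hn fun u => ?_)
    obtain ⟨c, hc⟩ := Submodule.mem_span_singleton.mp (hcon u)
    exact ⟨c, hc.symm⟩
  obtain ⟨u, hu⟩ := this
  obtain ⟨f, hfv, hfmap⟩ :=
    Submodule.exists_dual_map_eq_bot_of_notMem hu inferInstance
  have hfu : f u = 0 := by
    have : f u ∈ (Submodule.span ℂ {u}).map f :=
      ⟨u, Submodule.mem_span_singleton_self u, rfl⟩
    rw [hfmap] at this
    simpa using this
  set c := f (a.mulVec u) with hcdef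
  set w : Fin n → ℂ := fun j => f (fun k => if j = k then (1:ℂ) else 0) with hwdef
  have hfx : ∀ x : Fin n → ℂ, f x = ∑ j, x j * w j := by
    intro x
    conv_lhs => rw [pi_eq_sum_univ x, map_sum]
    refine Finset.sum_congr rfl fun j _ => ?_
    rw [_root_.map_smul, smul_eq_mul]
  refine ⟨c⁻¹ • Matrix.of (fun i j => u i * w j), ?_, ?_⟩
  · rw [smul_mul_smul_comm]
    have : (Matrix.of (fun i j => u i * w j) : Matrix (Fin n) (Fin n) ℂ) *
        Matrix.of (fun i j => u i * w j) = 0 := by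
      ext i k
      simp only [Matrix.mul_apply, Matrix.of_apply, Matrix.zero_apply]
      have : ∑ j, u i * w j * (u j * w k) = (u i * w k) * ∑ j, u j * w j := by
        rw [Finset.mul_sum]; exact Finset.sum_congr rfl fun j _ => by ring
      rw [this, ← hfx u, hfu, mul_zero]
    rw [this, smul_zero]
  · have hc0 : c ≠ 0 := hfv
    rw [Matrix.mul_smul, Matrix.trace_smul]
    have : (a * Matrix.of (fun i j => u i * w j)).trace = c := by
      rw [Matrix.trace]
      simp only [Matrix.diag_apply, Matrix.mul_apply, Matrix.of_apply]
      rw [hcdef, hfx (a.mulVec u)]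
      refine Finset.sum_congr rfl fun i _ => ?_
      rw [Matrix.mulVec]
      simp only [dotProduct]
      rw [Finset.sum_mul]
      refine Finset.sum_congr rfl fun j _ => ?_
      ring
    rw [this, smul_eq_mul, inv_mul_cancel₀ hc0]

lemma key (hn : 0 < n) {a : Matrix (Fin n) (Fin n) ℂ} (ha : ¬∃ c : ℂ, a = c • 1) :
    ∃ m : Matrix (Fin n) (Fin n) ℂ,
      specRad n m = 0 ∧ specRad n a + 1 ≤ specRad n (a + m) := by
  obtain ⟨N, hN2, hNtr⟩ := exists_nilpotent_pert hn ha
  set ρ := specRad n a with hρdef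
  set R : ℝ := n * (ρ + 1) ^ 2 with hRdef
  set t : ℂ := ((R : ℂ) - (a * a).trace) / 2 with htdef
  have hqsq : (t • N) * (t • N) = 0 := by
    rw [smul_mul_smul_comm, hN2, smul_zero]
  refine ⟨t • N, specRad_sq_zero hqsq, ?_⟩
  have htrace : ((a + t • N) * (a + t • N)).trace = (R : ℂ) := by
    have expand : (a + t • N) * (a + t • N)
        = a * a + t • (a * N) + t • (N * a) + (t • N) * (t • N) := by
      rw [add_mul, mul_add, mul_add, Matrix.mul_smul, Matrix.smul_mul]
      abel
    rw [expand, hqsq, add_zero, Matrix.trace_add, Matrix.trace_add,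
      Matrix.trace_smul, Matrix.trace_smul, Matrix.trace_mul_comm N a,
      hNtr, smul_eq_mul, mul_one, htdef]
    ring
  have hR0 : (0:ℝ) ≤ R := by positivity
  have habs : ‖((a + t • N) * (a + t • N)).trace‖ = R := by
    rw [htrace, Complex.norm_of_nonneg hR0]
  have hineq := abs_trace_sq_le (a + t • N)
  rw [habs, hRdef] at hineq
  have hnpos : (0:ℝ) < n := by exact_mod_cast hn
  have hsq : (ρ + 1) ^ 2 ≤ specRad n (a + t • N) ^ 2 :=
    le_of_mul_le_mul_left (by linarith) hnpos
  have h1 : 0 ≤ ρ + 1 := by have := specRad_nonneg a; linarith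
  have h2 := specRad_nonneg (a + t • N)
  nlinarith [sq_nonneg (ρ + 1 - specRad n (a + t • N)), sq_nonneg (ρ + 1 + specRad n (a + t • N))]

end Aux

theorem stmt_6 (n : ℕ) (T : Matrix (Fin n) (Fin n) ℂ → Matrix (Fin n) (Fin n) ℂ)
    (hT : IsLinearMap ℝ T) (hbij : Function.Bijective T)
    (hρ : ∀ x, specRad n (T x) = specRad n x) :
    (∀ lam : ℂ, ∃ mu : ℂ, T (lam • (1 : Matrix (Fin n) (Fin n) ℂ)) = mu • 1) ∧
      ∃ mu : ℂ, ‖mu‖ = 1 ∧ T 1 = mu • (1 : Matrix (Fin n) (Fin n) ℂ) := by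
  rcases Nat.eq_zero_or_pos n with rfl | hn
  · haveI : Subsingleton (Matrix (Fin 0) (Fin 0) ℂ) :=
      ⟨fun a b => by ext i j; exact i.elim0⟩
    exact ⟨fun lam => ⟨1, Subsingleton.elim _ _⟩, 1, by simp, Subsingleton.elim _ _⟩
  · have hscal : ∀ lam : ℂ, ∃ mu : ℂ, T (lam • 1) = mu • 1 := by
      intro lam
      by_contra hns
      obtain ⟨m, hm0, hmge⟩ := key hn hns
      obtain ⟨x, rfl⟩ := hbij.2 m
      have hadd : specRad n (T (lam • 1) + T x) = specRad n (lam • 1 + x) := by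
        rw [← hT.map_add, hρ]
      have hle : specRad n (lam • 1 + x) ≤ ‖lam‖ + specRad n x :=
        specRad_smul_one_add lam x
      have h1 : specRad n (T (lam • 1)) = ‖lam‖ := by
        rw [hρ, specRad_smul_one hn]
      have h2 : specRad n x = 0 := by rw [← hρ]; exact hm0
      rw [hadd, h1] at hmge
      rw [h2] at hle
      linarith
    refine ⟨hscal, ?_⟩
    obtain ⟨mu, hmu⟩ := hscal 1
    rw [one_smul] at hmu
    refine ⟨mu, ?_, hmu⟩
    have h1 := hρ 1
    rw [hmu] at h1
    rw [specRad_smul_one hn] at h1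
    rw [h1]
    have : (1 : Matrix (Fin n) (Fin n) ℂ) = (1:ℂ) • 1 := by rw [one_smul]
    rw [this, specRad_smul_one hn]
    simp
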